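/- Let R = k[x,y]/(y² − x^n) localized at (x,y), with n ≥ 8 and k a field. Let I be the ideal of R generated by x⁶ and x²y. Then the Hilbert–Samuel polynomial of I is p_I(t) = 12t − 4 for t ≫ 0; that is, e_0(I) = 12 and e_1(I) = 16 − 12 = 4 in the normalization length(R/I^{t+1}) = e_0(I)(t+1) − e_1(I). -/

import Mathlib

set_option synthInstance.maxHeartbeats 1000000
set_option maxHeartbeats 1000000

open Polynomial in
theorem hs_mem_T {k A : Type*} [Field k] [CommRing A] [Algebra k A] {x y : A} {n : ℕ}
    (hyx : y ^ 2 = x ^ n)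
    (hsp : ∀ z : A, ∃ p0 p1 : Polynomial k, z = aeval x p0 + aeval x p1 * y)
    {a b : ℕ} (hba : b ≤ a) (hab : a ≤ b + n) (z : A) :
    z ∈ Ideal.span {x ^ a, x ^ b * y} ↔
      ∃ P Q : Polynomial k, z = x ^ a * aeval x P + x ^ b * aeval x Q * y := by
  constructor
  · intro h
    rw [Ideal.mem_span_pair] at h
    obtain ⟨c, d, hcd⟩ := h
    obtain ⟨c0, c1, rfl⟩ := hsp c
    obtain ⟨d0, d1, rfl⟩ := hsp d
    refine ⟨c0 + X ^ (b + n - a) * d1, d0 + X ^ (a - b) * c1, ?_⟩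
    have e1 : (x : A) ^ a * x ^ (b + n - a) = x ^ b * x ^ n := by
      rw [← pow_add, ← pow_add]; congr 1 <;> omega
    have e2 : (x : A) ^ b * x ^ (a - b) = x ^ a := by
      rw [← pow_add]; congr 1 <;> omega
    simp only [map_add, map_mul, map_pow, aeval_X]
    rw [← hcd]
    linear_combination (-(aeval x c1 * y)) * e2 - aeval x d1 * e1 + aeval x d1 * x ^ b * hyx
  · rintro ⟨P, Q, rfl⟩
    have h1 : (x : A) ^ a ∈ Ideal.span {x ^ a, x ^ b * y} :=
      Ideal.subset_span (by simp)
    have h2 : (x : A) ^ b * y ∈ Ideal.span {x ^ a, x ^ b * y} :=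
      Ideal.subset_span (by simp)
    have e : x ^ a * aeval x P + x ^ b * aeval x Q * y
        = aeval x P * x ^ a + aeval x Q * (x ^ b * y) := by ring
    rw [e]
    exact Ideal.add_mem _ (Ideal.mul_mem_left _ _ h1) (Ideal.mul_mem_left _ _ h2)
open Polynomial in
theorem hs_poly_zero {k : Type*} [Field k] {c e : ℕ} {P : Polynomial k}
    (h : (X : Polynomial k) ^ c = X ^ e * P) (hce : c < e) : False := by
  have hP : P ≠ 0 := by
    rintro rfl
    rw [mul_zero] at h
    exact pow_ne_zero _ Polynomial.X_ne_zero h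
  have hd := congrArg Polynomial.natDegree h
  rw [Polynomial.natDegree_X_pow,
    Polynomial.natDegree_mul (pow_ne_zero _ Polynomial.X_ne_zero) hP,
    Polynomial.natDegree_X_pow] at hd
  omega

-- membership of monomials
theorem hs_pow_mem {A : Type*} [CommRing A] (x y : A) {a b c : ℕ} (hac : a ≤ c) :
    x ^ c ∈ Ideal.span {x ^ a, x ^ b * y} := by
  have h1 : (x : A) ^ a ∈ Ideal.span {x ^ a, x ^ b * y} := Ideal.subset_span (by simp)
  have : (x : A) ^ c = x ^ (c - a) * x ^ a := by rw [← pow_add]; congr 1 <;> omega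
  rw [this]; exact Ideal.mul_mem_left _ _ h1

theorem hs_pow_mul_mem {A : Type*} [CommRing A] (x y : A) {a b c : ℕ} (hbc : b ≤ c) :
    x ^ c * y ∈ Ideal.span {x ^ a, x ^ b * y} := by
  have h2 : (x : A) ^ b * y ∈ Ideal.span {x ^ a, x ^ b * y} := Ideal.subset_span (by simp)
  have : (x : A) ^ c * y = x ^ (c - b) * (x ^ b * y) := by
    rw [← mul_assoc, ← pow_add]; congr 2; omega
  rw [this]; exact Ideal.mul_mem_left _ _ h2

theorem hs_T_mono {A : Type*} [CommRing A] (x y : A) {a b a' b' : ℕ} (ha : a' ≤ a) (hb : b' ≤ b) :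
    Ideal.span {x ^ a, x ^ b * y} ≤ Ideal.span {x ^ a', x ^ b' * y} := by
  rw [Ideal.span_le]
  rintro z (rfl | rfl)
  · exact hs_pow_mem x y ha
  · exact hs_pow_mul_mem x y hb

open Polynomial in
theorem hs_not_mem_pow {k A : Type*} [Field k] [CommRing A] [Algebra k A] {x y : A} {n : ℕ}
    (hyx : y ^ 2 = x ^ n)
    (hsp : ∀ z : A, ∃ p0 p1 : Polynomial k, z = aeval x p0 + aeval x p1 * y)
    (hind : ∀ p0 p1 : Polynomial k, aeval x p0 + aeval x p1 * y = 0 → p0 = 0 ∧ p1 = 0)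
    {a b c : ℕ} (hba : b ≤ a) (hab : a ≤ b + n) (hca : c < a) :
    x ^ c ∉ Ideal.span {x ^ a, x ^ b * y} := by
  intro h
  rw [hs_mem_T hyx hsp hba hab] at h
  obtain ⟨P, Q, hPQ⟩ := h
  have h0 : aeval x ((X : Polynomial k) ^ c - X ^ a * P) + aeval x (-(X ^ b * Q)) * y = 0 := by
    simp only [map_sub, map_mul, map_pow, map_neg, aeval_X]
    linear_combination hPQ
  obtain ⟨h1, _⟩ := hind _ _ h0
  have h1' : (X : Polynomial k) ^ c = X ^ a * P := by linear_combination h1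
  exact hs_poly_zero h1' hca

open Polynomial in
theorem hs_not_mem_pow_mul {k A : Type*} [Field k] [CommRing A] [Algebra k A] {x y : A} {n : ℕ}
    (hyx : y ^ 2 = x ^ n)
    (hsp : ∀ z : A, ∃ p0 p1 : Polynomial k, z = aeval x p0 + aeval x p1 * y)
    (hind : ∀ p0 p1 : Polynomial k, aeval x p0 + aeval x p1 * y = 0 → p0 = 0 ∧ p1 = 0)
    {a b c : ℕ} (hba : b ≤ a) (hab : a ≤ b + n) (hcb : c < b) :
    x ^ c * y ∉ Ideal.span {x ^ a, x ^ b * y} := by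
  intro h
  rw [hs_mem_T hyx hsp hba hab] at h
  obtain ⟨P, Q, hPQ⟩ := h
  have h0 : aeval x (-((X : Polynomial k) ^ a * P)) + aeval x (X ^ c - X ^ b * Q) * y = 0 := by
    simp only [map_sub, map_mul, map_pow, map_neg, aeval_X]
    linear_combination hPQ
  obtain ⟨_, h2⟩ := hind _ _ h0
  have h2' : (X : Polynomial k) ^ c = X ^ b * Q := by linear_combination h2
  exact hs_poly_zero h2' hcb

theorem hs_pow_eq {k A : Type*} [Field k] [CommRing A] [Algebra k A] {x y : A} {n : ℕ}
    (hyx : y ^ 2 = x ^ n) (hn : 8 ≤ n) (t : ℕ) :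
    (Ideal.span {x ^ 6, x ^ 2 * y}) ^ (t + 1)
      = Ideal.span {x ^ (6 * t + 6), x ^ (6 * t + 2) * y} := by
  induction t with
  | zero => norm_num
  | succ t ih =>
    have : (Ideal.span {x ^ 6, x ^ 2 * y}) ^ (t + 1 + 1)
        = Ideal.span {x ^ (6 * t + 6), x ^ (6 * t + 2) * y} * Ideal.span {x ^ 6, x ^ 2 * y} := by
      rw [pow_succ, ih]
    rw [this]
    apply le_antisymm
    · rw [Ideal.span_mul_span', Ideal.span_le]
      rintro z hz
      rw [Set.mem_mul] at hz
      obtain ⟨u, hu, v, hv, rfl⟩ := hz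
      rcases hu with rfl | rfl <;> rcases hv with rfl | rfl
      · have e : (x : A) ^ (6 * t + 6) * x ^ 6 = x ^ (6 * (t+1) + 6) := by
          rw [← pow_add]; congr 1 <;> ring_nf <;> omega
        rw [e]; exact hs_pow_mem x y le_rfl
      · have e : (x : A) ^ (6 * t + 6) * (x ^ 2 * y) = x ^ (6 * (t+1) + 2) * y := by
          rw [← mul_assoc, ← pow_add]; congr 2 <;> ring_nf <;> omega
        rw [e]; exact hs_pow_mul_mem x y le_rfl
      · have e : (x : A) ^ (6 * t + 2) * y * x ^ 6 = x ^ (6 * (t+1) + 2) * y := by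
          rw [mul_right_comm, ← pow_add]; congr 2 <;> ring_nf <;> omega
        rw [e]; exact hs_pow_mul_mem x y le_rfl
      · have e : (x : A) ^ (6 * t + 2) * y * (x ^ 2 * y) = x ^ (6 * t + 4 + n) := by
          calc (x : A) ^ (6 * t + 2) * y * (x ^ 2 * y)
              = x ^ (6 * t + 2) * x ^ 2 * y ^ 2 := by ring
            _ = x ^ (6 * t + 2) * x ^ 2 * x ^ n := by rw [hyx]
            _ = x ^ (6 * t + 4 + n) := by rw [← pow_add, ← pow_add]
        rw [e]; exact hs_pow_mem x y (by omega)
    · rw [Ideal.span_le]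
      rintro z (rfl | rfl)
      · have e : (x : A) ^ (6 * (t+1) + 6) = x ^ (6 * t + 6) * x ^ 6 := by
          rw [← pow_add]; congr 1 <;> ring_nf <;> omega
        rw [e]
        exact Ideal.mul_mem_mul (hs_pow_mem x y le_rfl) (hs_pow_mem x y le_rfl)
      · have e : (x : A) ^ (6 * (t+1) + 2) * y = x ^ (6 * t + 2) * y * x ^ 6 := by
          rw [mul_right_comm, ← pow_add]; congr 2 <;> ring_nf <;> omega
        rw [e]
        exact Ideal.mul_mem_mul (hs_pow_mul_mem x y le_rfl) (hs_pow_mem x y le_rfl)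

/-- `R`-submodules of `R ⧸ J` are the same as ideals of `R ⧸ J`. -/
def hs_submoduleOrderIso {R : Type*} [CommRing R] (J : Ideal R) :
    Submodule R (R ⧸ J) ≃o Ideal (R ⧸ J) where
  toFun N :=
    { carrier := N
      add_mem' := fun h1 h2 => N.add_mem h1 h2
      zero_mem' := N.zero_mem
      smul_mem' := by
        intro c z hz
        obtain ⟨r, rfl⟩ := Ideal.Quotient.mk_surjective c
        have h : Ideal.Quotient.mk J r • z = r • z := by
          obtain ⟨w, rfl⟩ := Ideal.Quotient.mk_surjective z
          rw [smul_eq_mul, ← map_mul]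
          rfl
        rw [h]
        exact N.smul_mem r hz }
  invFun N :=
    { carrier := N
      add_mem' := fun h1 h2 => N.add_mem h1 h2
      zero_mem' := N.zero_mem
      smul_mem' := by
        intro r z hz
        have h : r • z = Ideal.Quotient.mk J r • z := by
          obtain ⟨w, rfl⟩ := Ideal.Quotient.mk_surjective z
          rw [smul_eq_mul, ← map_mul]
          rfl
        rw [h]
        exact N.smul_mem _ hz }
  left_inv N := by ext z; rfl
  right_inv N := by ext z; rfl
  map_rel_iff' := Iff.rfl

theorem hs_mem_map_iff {A : Type*} [CommRing A] {T S : Ideal A} (hTS : T ≤ S) (w : A) :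
    Ideal.Quotient.mk T w ∈ Ideal.map (Ideal.Quotient.mk T) S ↔ w ∈ S := by
  constructor
  · intro h
    rw [Ideal.mem_map_iff_of_surjective _ Ideal.Quotient.mk_surjective] at h
    obtain ⟨u, hu, he⟩ := h
    rw [Ideal.Quotient.eq] at he
    have hw : w = u - (u - w) := by ring
    rw [hw]
    exact S.sub_mem hu (hTS he)
  · exact fun h => Ideal.mem_map_of_mem _ h

open Polynomial in
theorem hs_map_lt {k A : Type*} [Field k] [CommRing A] [Algebra k A] {x y : A} {n : ℕ}
    (hyx : y ^ 2 = x ^ n)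
    (hsp : ∀ z : A, ∃ p0 p1 : Polynomial k, z = aeval x p0 + aeval x p1 * y)
    (hind : ∀ p0 p1 : Polynomial k, aeval x p0 + aeval x p1 * y = 0 → p0 = 0 ∧ p1 = 0)
    {T : Ideal A} {a1 b1 a2 b2 : ℕ}
    (hT1 : T ≤ Ideal.span {x ^ a1, x ^ b1 * y})
    (h21a : a2 ≤ a1) (h21b : b2 ≤ b1) (hlt : a2 < a1 ∨ b2 < b1)
    (hb1a1 : b1 ≤ a1) (ha1n : a1 ≤ b1 + n) :
    Ideal.map (Ideal.Quotient.mk T) (Ideal.span {x ^ a1, x ^ b1 * y})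
      < Ideal.map (Ideal.Quotient.mk T) (Ideal.span {x ^ a2, x ^ b2 * y}) := by
  refine lt_of_le_of_ne (Ideal.map_mono (hs_T_mono x y h21a h21b)) ?_
  intro he
  rcases hlt with hlt | hlt
  · have h1 : Ideal.Quotient.mk T (x ^ a2) ∈
        Ideal.map (Ideal.Quotient.mk T) (Ideal.span {x ^ a2, x ^ b2 * y}) :=
      Ideal.mem_map_of_mem _ (hs_pow_mem x y le_rfl)
    rw [← he, hs_mem_map_iff hT1] at h1
    exact hs_not_mem_pow hyx hsp hind hb1a1 ha1n hlt h1
  · have h1 : Ideal.Quotient.mk T (x ^ b2 * y) ∈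
        Ideal.map (Ideal.Quotient.mk T) (Ideal.span {x ^ a2, x ^ b2 * y}) :=
      Ideal.mem_map_of_mem _ (hs_pow_mul_mem x y le_rfl)
    rw [← he, hs_mem_map_iff hT1] at h1
    exact hs_not_mem_pow_mul hyx hsp hind hb1a1 ha1n hlt h1

theorem hs_fin_strictmono_le {L B : ℕ} (f : Fin (L + 1) → ℕ) (hf : StrictMono f)
    (hB : ∀ i, f i ≤ B) : L ≤ B := by
  have key : ∀ j : ℕ, ∀ h : j ≤ L, j ≤ f ⟨j, by omega⟩ := by
    intro j
    induction j with
    | zero => intro h; exact Nat.zero_le _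
    | succ j ih =>
      intro h
      have h1 := ih (by omega)
      have h2 := hf (show (⟨j, by omega⟩ : Fin (L + 1)) < ⟨j + 1, by omega⟩ by
        simp [Fin.lt_def])
      omega
  have := key L le_rfl
  have := hB ⟨L, by omega⟩
  omega

open Polynomial in
theorem hs_quot_span_top {k A : Type*} [Field k] [CommRing A] [Algebra k A] {x y : A}
    (hsp : ∀ z : A, ∃ p0 p1 : Polynomial k, z = aeval x p0 + aeval x p1 * y)
    {a b : ℕ} (ha : 0 < a) (hb : 0 < b)
    (g : Fin (a + b) → A ⧸ Ideal.span {x ^ a, x ^ b * y})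
    (hg : ∀ i : Fin (a + b), g i =
      if (i : ℕ) < a then Ideal.Quotient.mk (Ideal.span {x ^ a, x ^ b * y}) (x ^ (i : ℕ))
      else Ideal.Quotient.mk (Ideal.span {x ^ a, x ^ b * y}) (x ^ ((i : ℕ) - a) * y)) :
    Submodule.span k (Set.range g) = ⊤ := by
  have hmem : ∀ i : ℕ, i < a → Ideal.Quotient.mk (Ideal.span {x ^ a, x ^ b * y}) (x ^ i) ∈ Submodule.span k (Set.range g) := by
    intro i hi
    apply Submodule.subset_span
    exact ⟨⟨i, by omega⟩, by rw [hg]; simp [hi]⟩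
  have hmem' : ∀ i : ℕ, i < b →
      Ideal.Quotient.mk (Ideal.span {x ^ a, x ^ b * y}) (x ^ i * y) ∈ Submodule.span k (Set.range g) := by
    intro i hi
    apply Submodule.subset_span
    refine ⟨⟨a + i, by omega⟩, ?_⟩
    rw [hg]
    rw [if_neg (by simp)]
    congr 2
    simp
  rw [Submodule.eq_top_iff']
  intro z
  obtain ⟨w, rfl⟩ := Ideal.Quotient.mk_surjective z
  obtain ⟨p0, p1, rfl⟩ := hsp w
  have hdeg : ∀ (p : Polynomial k) (c : ℕ), 0 < c → (p %ₘ X ^ c).natDegree < c := by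
    intro p c hc
    rcases eq_or_ne (p %ₘ X ^ c) 0 with h0 | h0
    · rw [h0]; simpa using hc
    · rw [Polynomial.natDegree_lt_iff_degree_lt h0, ← Polynomial.degree_X_pow (R := k) c]
      exact Polynomial.degree_modByMonic_lt p (Polynomial.monic_X_pow c)
  have key0 : (Ideal.Quotient.mk (Ideal.span {x ^ a, x ^ b * y})) (aeval x p0) =
      (Ideal.Quotient.mk (Ideal.span {x ^ a, x ^ b * y})) (aeval x (p0 %ₘ X ^ a)) := by
    rw [Ideal.Quotient.eq]
    have hd : p0 - p0 %ₘ X ^ a = X ^ a * (p0 /ₘ X ^ a) := by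
      linear_combination -(Polynomial.modByMonic_add_div p0 (X ^ a))
    rw [← map_sub, hd, map_mul, map_pow, aeval_X]
    exact Ideal.mul_mem_right _ _ (hs_pow_mem x y le_rfl)
  have key1 : (Ideal.Quotient.mk (Ideal.span {x ^ a, x ^ b * y})) (aeval x p1 * y) =
      (Ideal.Quotient.mk (Ideal.span {x ^ a, x ^ b * y})) (aeval x (p1 %ₘ X ^ b) * y) := by
    rw [Ideal.Quotient.eq]
    have hd : p1 - p1 %ₘ X ^ b = X ^ b * (p1 /ₘ X ^ b) := by
      linear_combination -(Polynomial.modByMonic_add_div p1 (X ^ b))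
    have : aeval x p1 * y - aeval x (p1 %ₘ X ^ b) * y
        = x ^ b * y * aeval x (p1 /ₘ X ^ b) := by
      rw [← sub_mul, ← map_sub, hd, map_mul, map_pow, aeval_X]
      ring
    rw [this]
    exact Ideal.mul_mem_right _ _ (hs_pow_mul_mem x y le_rfl)
  rw [map_add, key0, key1]
  apply Submodule.add_mem
  · rw [Polynomial.aeval_eq_sum_range' (hdeg p0 a ha), map_sum]
    apply Submodule.sum_mem
    intro i hi
    rw [← Ideal.Quotient.mkₐ_eq_mk k (Ideal.span {x ^ a, x ^ b * y}), map_smul]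
    exact Submodule.smul_mem _ _ (by
      rw [Ideal.Quotient.mkₐ_eq_mk k (Ideal.span {x ^ a, x ^ b * y})]
      exact hmem i (Finset.mem_range.mp hi))
  · rw [Polynomial.aeval_eq_sum_range' (hdeg p1 b hb), Finset.sum_mul, map_sum]
    apply Submodule.sum_mem
    intro i hi
    rw [smul_mul_assoc, ← Ideal.Quotient.mkₐ_eq_mk k (Ideal.span {x ^ a, x ^ b * y}), map_smul]
    exact Submodule.smul_mem _ _ (by
      rw [Ideal.Quotient.mkₐ_eq_mk k (Ideal.span {x ^ a, x ^ b * y})]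
      exact hmem' i (Finset.mem_range.mp hi))

open Polynomial in
theorem hs_quot_finrank {k A : Type*} [Field k] [CommRing A] [Algebra k A] {x y : A}
    (hsp : ∀ z : A, ∃ p0 p1 : Polynomial k, z = aeval x p0 + aeval x p1 * y)
    {a b : ℕ} (ha : 0 < a) (hb : 0 < b) :
    Module.Finite k (A ⧸ Ideal.span {x ^ a, x ^ b * y}) ∧
      Module.finrank k (A ⧸ Ideal.span {x ^ a, x ^ b * y}) ≤ a + b := by
  classical
  set g : Fin (a + b) → A ⧸ Ideal.span {x ^ a, x ^ b * y} := fun i =>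
    if (i : ℕ) < a then Ideal.Quotient.mk (Ideal.span {x ^ a, x ^ b * y}) (x ^ (i : ℕ))
    else Ideal.Quotient.mk (Ideal.span {x ^ a, x ^ b * y}) (x ^ ((i : ℕ) - a) * y) with hgdef
  have htop : Submodule.span k (Set.range g) = ⊤ :=
    hs_quot_span_top hsp ha hb g (fun i => by rw [hgdef])
  constructor
  · rw [Module.finite_def]
    exact ⟨Finset.univ.image g, by
      rw [Finset.coe_image, Finset.coe_univ, Set.image_univ]; exact htop⟩
  · calc Module.finrank k (A ⧸ Ideal.span {x ^ a, x ^ b * y})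
        = Module.finrank k (⊤ : Submodule k (A ⧸ Ideal.span {x ^ a, x ^ b * y})) :=
          (finrank_top _ _).symm
      _ = Module.finrank k (Submodule.span k (Set.range g)) := by rw [htop]
      _ ≤ (Set.range g).toFinset.card := finrank_span_le_card _
      _ = Fintype.card (Set.range g) := Set.toFinset_card _
      _ ≤ Fintype.card (Fin (a + b)) := Fintype.card_range_le g
      _ = a + b := Fintype.card_fin _

open Polynomial in
theorem hs_krullDim {k A : Type*} [Field k] [CommRing A] [Algebra k A] {x y : A} {n : ℕ}
    (hyx : y ^ 2 = x ^ n)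
    (hsp : ∀ z : A, ∃ p0 p1 : Polynomial k, z = aeval x p0 + aeval x p1 * y)
    (hind : ∀ p0 p1 : Polynomial k, aeval x p0 + aeval x p1 * y = 0 → p0 = 0 ∧ p1 = 0)
    (hn : 8 ≤ n) (t : ℕ) :
    Order.krullDim (Ideal (A ⧸ Ideal.span {x ^ (6 * t + 6), x ^ (6 * t + 2) * y}))
      = ((12 * t + 8 : ℕ) : WithBot ℕ∞) := by
  have hfin := hs_quot_finrank hsp (a := 6 * t + 6) (b := 6 * t + 2) (by omega) (by omega)
  haveI : Module.Finite k (A ⧸ Ideal.span {x ^ (6 * t + 6), x ^ (6 * t + 2) * y}) := hfin.1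
  have hfr : Module.finrank k (A ⧸ Ideal.span {x ^ (6 * t + 6), x ^ (6 * t + 2) * y})
      ≤ 12 * t + 8 := le_trans hfin.2 (by omega)
  set Q := A ⧸ Ideal.span {x ^ (6 * t + 6), x ^ (6 * t + 2) * y} with hQ
  apply le_antisymm
  · rw [Order.krullDim_eq_iSup_length]
    have : (⨆ (p : LTSeries (Ideal Q)), (p.length : ℕ∞)) ≤ ((12 * t + 8 : ℕ) : ℕ∞) := by
      apply iSup_le
      intro p
      rw [Nat.cast_le]
      set f : Fin (p.length + 1) → ℕ :=
        fun i => Module.finrank k ((p.toFun i).restrictScalars k) with hf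
      have hmono : StrictMono f := by
        intro i j hij
        have hlt : p.toFun i < p.toFun j := p.strictMono hij
        apply Submodule.finrank_lt_finrank_of_lt
        rw [SetLike.lt_iff_le_and_exists]
        obtain ⟨w, hw1, hw2⟩ := SetLike.exists_of_lt hlt
        exact ⟨fun z hz => hlt.le hz, w, hw1, hw2⟩
      have hBd : ∀ i, f i ≤ 12 * t + 8 := fun i =>
        le_trans (Submodule.finrank_le _) hfr
      exact hs_fin_strictmono_le f hmono hBd
    exact le_trans (WithBot.coe_le_coe.mpr this) (by exact_mod_cast le_rfl)
  · set av : ℕ → ℕ := fun r => if r ≤ 4 then 6 * t + 6 - r else 6 * t + 2 - (r - 4) / 2 with hav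
    set bv : ℕ → ℕ := fun r => if r ≤ 4 then 6 * t + 2 else 6 * t + 2 - (r - 3) / 2 with hbv
    have F1 : ∀ r, bv r ≤ av r := by
      intro r; rw [hav, hbv]; dsimp only; split_ifs <;> omega
    have F2 : ∀ r, av r ≤ bv r + 4 := by
      intro r; rw [hav, hbv]; dsimp only; split_ifs <;> omega
    have F3 : ∀ r, av r ≤ 6 * t + 6 ∧ bv r ≤ 6 * t + 2 := by
      intro r; rw [hav, hbv]; dsimp only; split_ifs <;> omega
    have F4 : ∀ r, r < 12 * t + 8 →
        (av (r + 1) ≤ av r ∧ bv (r + 1) ≤ bv r) ∧ (av (r + 1) < av r ∨ bv (r + 1) < bv r) := by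
      intro r hr; rw [hav, hbv]; dsimp only; split_ifs <;> omega
    set chain : LTSeries (Ideal Q) :=
      { length := 12 * t + 8
        toFun := fun i =>
          Ideal.map (Ideal.Quotient.mk (Ideal.span {x ^ (6 * t + 6), x ^ (6 * t + 2) * y}))
            (Ideal.span {x ^ av (i : ℕ), x ^ bv (i : ℕ) * y})
        step := by
          intro i
          have h4 := F4 (i : ℕ) (by omega)
          simp only [Fin.coe_castSucc, Fin.val_succ]
          exact hs_map_lt hyx hsp hind
            (hs_T_mono x y (F3 (i : ℕ)).1 (F3 (i : ℕ)).2)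
            h4.1.1 h4.1.2 h4.2 (F1 _) (le_trans (F2 _) (by omega)) } with hchain
    have hle := Order.LTSeries.length_le_krullDim chain
    exact_mod_cast hle

/-- The length of an `R`-module, as the Krull dimension of its lattice of
submodules. -/
noncomputable def moduleLength (R M : Type*) [Ring R] [AddCommGroup M] [Module R M] :
    WithBot ℕ∞ :=
  Order.krullDim (Submodule R M)

open MvPolynomial in
/-- Let `R = k[x,y]_{(x,y)}/(y² − xⁿ)` with `n ≥ 8`, and let
`I = (x⁶, x²y) ⊆ R`.  Then the Hilbert–Samuel function of `I` satisfies
`length_R (R/I^(t+1)) = 12(t+1) − 4` for `t ≫ 0`; i.e. `e₀(I) = 12` and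
`e₁(I) = 4`. -/
theorem stmt_11 (k : Type*) [Field k] (n : ℕ) (hn : 8 ≤ n)
    (A : Type*) [CommRing A] [Algebra k A]
    (q : MvPolynomial (Fin 2) k →ₐ[k] A) (hq : Function.Surjective q)
    (hker : RingHom.ker q = Ideal.span {(X 1 : MvPolynomial (Fin 2) k) ^ 2 - X 0 ^ n})
    (x y : A) (hx : q (X 0) = x) (hy : q (X 1) = y)
    (m : Ideal A) (hm : m = Ideal.span {x, y}) (hmp : m.IsPrime)
    (R : Type*) [CommRing R] [Algebra A R]
    (hloc : IsLocalization (m.primeCompl (hp := hmp)) R) :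
    ∃ N : ℕ, ∀ t ≥ N,
      moduleLength R
          (R ⧸ (Ideal.span {algebraMap A R (x ^ 6), algebraMap A R (x ^ 2 * y)}) ^ (t + 1)) =
        ((12 * (t + 1) - 4 : ℕ) : WithBot ℕ∞) := by
  -- the relation y² = xⁿ
  have hyy : y ^ 2 = x ^ n := by
    have hgk : (X 1 : MvPolynomial (Fin 2) k) ^ 2 - X 0 ^ n ∈ RingHom.ker q := by
      rw [hker]; exact Ideal.subset_span rfl
    rw [RingHom.mem_ker] at hgk
    rw [map_sub, map_pow, map_pow, hx, hy] at hgk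
    exact sub_eq_zero.mp hgk
  -- spanning: every element of A is p₀(x) + p₁(x)·y
  have hsp : ∀ z : A, ∃ p0 p1 : Polynomial k,
      z = Polynomial.aeval x p0 + Polynomial.aeval x p1 * y := by
    intro z
    obtain ⟨F, rfl⟩ := hq z
    induction F using MvPolynomial.induction_on with
    | C a =>
      refine ⟨Polynomial.C a, 0, ?_⟩
      simp [MvPolynomial.algHom_C]
    | add F G hF hG =>
      obtain ⟨f0, f1, hf⟩ := hF
      obtain ⟨g0, g1, hg⟩ := hG
      refine ⟨f0 + g0, f1 + g1, ?_⟩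
      rw [map_add, hf, hg, map_add, map_add]
      ring
    | mul_X F i hF =>
      obtain ⟨f0, f1, hf⟩ := hF
      fin_cases i
      · refine ⟨f0 * Polynomial.X, f1 * Polynomial.X, ?_⟩
        have hx0 : q (X ((fun i => i) (⟨0, by norm_num⟩ : Fin 2))) = x := hx
        rw [map_mul, hf, hx0, map_mul, map_mul, Polynomial.aeval_X]
        ring
      · refine ⟨Polynomial.X ^ n * f1, f0, ?_⟩
        have hy1 : q (X ((fun i => i) (⟨1, by norm_num⟩ : Fin 2))) = y := hy
        rw [map_mul, hf, hy1, map_mul, map_pow, Polynomial.aeval_X]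
        have : (Polynomial.aeval x f0 + Polynomial.aeval x f1 * y) * y
            = Polynomial.aeval x f1 * y ^ 2 + Polynomial.aeval x f0 * y := by ring
        rw [this, hyy]
        ring
  -- linear independence of 1, y over k[x]
  have hind : ∀ p0 p1 : Polynomial k,
      Polynomial.aeval x p0 + Polynomial.aeval x p1 * y = 0 → p0 = 0 ∧ p1 = 0 := by
    intro p0 p1 h
    set F : MvPolynomial (Fin 2) k :=
      Polynomial.aeval (X 0) p0 + Polynomial.aeval (X 0) p1 * X 1 with hF
    have hqF : q F = 0 := by
      rw [hF, map_add, map_mul]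
      rw [← Polynomial.aeval_algHom_apply q (X 0) p0, ← Polynomial.aeval_algHom_apply q (X 0) p1,
        hx, hy]
      exact h
    have hmem : (X 1 : MvPolynomial (Fin 2) k) ^ 2 - X 0 ^ n ∣ F := by
      rw [← Ideal.mem_span_singleton, ← hker]
      exact hqF
    set Ψ : MvPolynomial (Fin 2) k →ₐ[k] Polynomial (Polynomial k) :=
      MvPolynomial.aeval ![Polynomial.C Polynomial.X, Polynomial.X] with hΨ
    have hdvd : Ψ ((X 1 : MvPolynomial (Fin 2) k) ^ 2 - X 0 ^ n) ∣ Ψ F := map_dvd _ hmem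
    have hg : Ψ ((X 1 : MvPolynomial (Fin 2) k) ^ 2 - X 0 ^ n)
        = Polynomial.X ^ 2 - Polynomial.C ((Polynomial.X : Polynomial k) ^ n) := by
      rw [map_sub, map_pow, map_pow, hΨ]
      simp only [MvPolynomial.aeval_X]
      norm_num [map_pow]
    have hcp : ∀ p : Polynomial k, Ψ (Polynomial.aeval (X 0) p) = Polynomial.C p := by
      intro p
      rw [← Polynomial.aeval_algHom_apply Ψ (X 0) p]
      have h0 : Ψ (X 0) = Polynomial.CAlgHom (R := k) (Polynomial.X : Polynomial k) := by
        rw [hΨ]; simp [Polynomial.CAlgHom]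
      rw [h0, Polynomial.aeval_algHom_apply, Polynomial.aeval_X_left_apply]
      rfl
    have hFv : Ψ F = Polynomial.C p1 * Polynomial.X + Polynomial.C p0 := by
      rw [hF, map_add, map_mul, hcp p0, hcp p1]
      have h1 : Ψ (X 1) = Polynomial.X := by rw [hΨ]; simp
      rw [h1]
      ring
    rw [hg, hFv] at hdvd
    have h2 : (Polynomial.X ^ 2 - Polynomial.C ((Polynomial.X : Polynomial k) ^ n)).degree = 2 :=
      Polynomial.degree_X_pow_sub_C (by norm_num) _
    have hlt : (Polynomial.C p1 * Polynomial.X + Polynomial.C p0).degree < 2 :=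
      lt_of_le_of_lt Polynomial.degree_linear_le (by norm_num)
    have hz := Polynomial.eq_zero_of_dvd_of_degree_lt hdvd (by rw [h2]; exact hlt)
    have h0 := congrArg (fun p => Polynomial.coeff p 0) hz
    have h1 := congrArg (fun p => Polynomial.coeff p 1) hz
    simp at h0 h1
    exact ⟨h0, h1⟩
  refine ⟨0, fun t _ => ?_⟩
  set T : Ideal A := Ideal.span {x ^ (6 * t + 6), x ^ (6 * t + 2) * y} with hTdef
  have hx_mem_m : x ∈ m := by rw [hm]; exact Ideal.subset_span (by simp)
  have hy_mem_m : y ∈ m := by rw [hm]; exact Ideal.subset_span (by simp)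
  -- the ideal in the statement is the extension of T
  have hJ : (Ideal.span {algebraMap A R (x ^ 6), algebraMap A R (x ^ 2 * y)}) ^ (t + 1)
      = Ideal.map (algebraMap A R) T := by
    have h1 : Ideal.span {algebraMap A R (x ^ 6), algebraMap A R (x ^ 2 * y)}
        = Ideal.map (algebraMap A R) (Ideal.span {x ^ 6, x ^ 2 * y}) := by
      rw [Ideal.map_span]
      congr 1
      rw [Set.image_insert_eq, Set.image_singleton]
    rw [h1, ← Ideal.map_pow, hs_pow_eq (k := k) hyy hn t]
  -- elements of the prime complement become units modulo T
  have hunit : ∀ u : A, u ∈ m.primeCompl → IsUnit (Ideal.Quotient.mk T u) := by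
    intro u hu
    obtain ⟨p0, p1, rfl⟩ := hsp u
    have hc0 : p0.coeff 0 ≠ 0 := by
      intro h0
      apply hu
      have e : Polynomial.aeval x p0 = x * Polynomial.aeval x p0.divX := by
        conv_lhs => rw [← Polynomial.X_mul_divX_add p0]
        rw [map_add, map_mul, Polynomial.aeval_X, Polynomial.aeval_C, h0, map_zero, add_zero]
      rw [e]
      exact m.add_mem (Ideal.mul_mem_right _ _ hx_mem_m)
        (Ideal.mul_mem_left _ _ hy_mem_m)
    set z := x * Polynomial.aeval x p0.divX + Polynomial.aeval x p1 * y with hzdef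
    have hdecomp : Polynomial.aeval x p0 + Polynomial.aeval x p1 * y
        = algebraMap k A (p0.coeff 0) + z := by
      rw [hzdef]
      conv_lhs => rw [← Polynomial.X_mul_divX_add p0]
      rw [map_add, map_mul, Polynomial.aeval_X, Polynomial.aeval_C]
      ring
    rw [hdecomp, map_add]
    have hxn : (x : A) ^ n = x * x ^ (n - 1) := by
      conv_lhs => rw [show n = 1 + (n - 1) by omega]
      rw [pow_add, pow_one]
    have hnil : IsNilpotent (Ideal.Quotient.mk T z) := by
      refine ⟨2 * (6 * t + 6), ?_⟩
      rw [← map_pow, Ideal.Quotient.eq_zero_iff_mem]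
      have hz2 : z ^ 2 = x * (x * Polynomial.aeval x p0.divX ^ 2
          + 2 * Polynomial.aeval x p0.divX * Polynomial.aeval x p1 * y
          + Polynomial.aeval x p1 ^ 2 * x ^ (n - 1)) := by
        rw [hzdef]
        linear_combination Polynomial.aeval x p1 ^ 2 * hyy
          + Polynomial.aeval x p1 ^ 2 * hxn
      rw [pow_mul, hz2, mul_pow]
      exact Ideal.mul_mem_right _ _ (hs_pow_mem x y le_rfl)
    have hcu : IsUnit (Ideal.Quotient.mk T (algebraMap k A (p0.coeff 0))) := by
      have e : (Ideal.Quotient.mk T) (algebraMap k A (p0.coeff 0))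
          = algebraMap k (A ⧸ T) (p0.coeff 0) := by
        rw [← Ideal.Quotient.mkₐ_eq_mk k T]
        exact (Ideal.Quotient.mkₐ k T).commutes _
      rw [e]
      exact (isUnit_iff_ne_zero.mpr hc0).map (algebraMap k (A ⧸ T))
    exact IsNilpotent.isUnit_add_left_of_commute hnil hcu (Commute.all _ _)
  -- the induced map on quotients is bijective
  have hbij : Function.Bijective
      (Ideal.quotientMap (Ideal.map (algebraMap A R) T) (algebraMap A R) Ideal.le_comap_map) := by
    constructor
    · rw [injective_iff_map_eq_zero]
      intro abar h
      obtain ⟨a, rfl⟩ := Ideal.Quotient.mk_surjective abar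
      rw [Ideal.quotientMap_mk, Ideal.Quotient.eq_zero_iff_mem,
        IsLocalization.mem_map_algebraMap_iff m.primeCompl R] at h
      obtain ⟨⟨j, u⟩, hju⟩ := h
      rw [← map_mul, IsLocalization.eq_iff_exists m.primeCompl R] at hju
      obtain ⟨c, hc⟩ := hju
      have hmem : (c : A) * (a * u) ∈ T := by
        rw [hc]; exact T.mul_mem_left _ j.2
      have hzero : Ideal.Quotient.mk T a * Ideal.Quotient.mk T ((c : A) * u) = 0 := by
        rw [← map_mul, Ideal.Quotient.eq_zero_iff_mem]
        have e : a * ((c : A) * u) = (c : A) * (a * u) := by ring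
        rw [e]; exact hmem
      have hcu : IsUnit (Ideal.Quotient.mk T ((c : A) * (u : A))) :=
        hunit _ (m.primeCompl.mul_mem c.2 u.2)
      exact (IsUnit.mul_left_eq_zero hcu).mp hzero
    · intro zeta
      obtain ⟨r, rfl⟩ := Ideal.Quotient.mk_surjective zeta
      obtain ⟨⟨a, u⟩, hmk⟩ := IsLocalization.mk'_surjective m.primeCompl r
      have hspec : r * algebraMap A R u = algebraMap A R a := by
        rw [← hmk]; exact IsLocalization.mk'_spec R a u
      obtain ⟨v, hv⟩ := Ideal.Quotient.mk_surjective
        (((hunit (u : A) u.2).unit⁻¹ : (A ⧸ T)ˣ) : A ⧸ T)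
      have huv : Ideal.Quotient.mk T ((u : A) * v) = 1 := by
        have hmul := Units.mul_inv ((hunit (u : A) u.2).unit)
        rw [IsUnit.unit_spec] at hmul
        rw [map_mul, hv]
        exact hmul
      have htuv : (u : A) * v - 1 ∈ T := by
        have e : Ideal.Quotient.mk T ((u : A) * v - 1) = 0 := by
          rw [map_sub, huv, map_one, sub_self]
        exact Ideal.Quotient.eq_zero_iff_mem.mp e
      refine ⟨Ideal.Quotient.mk T (a * v), ?_⟩
      rw [Ideal.quotientMap_mk, Ideal.Quotient.eq]
      have e : algebraMap A R (a * v) - r = r * algebraMap A R ((u : A) * v - 1) := by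
        rw [map_sub, map_mul, map_mul, map_one, ← hspec]
        ring
      rw [e]
      exact Ideal.mul_mem_left _ _ (Ideal.mem_map_of_mem _ htuv)
  -- put everything together
  have key : ∀ J : Ideal R, J = Ideal.map (algebraMap A R) T →
      moduleLength R (R ⧸ J) = ((12 * (t + 1) - 4 : ℕ) : WithBot ℕ∞) := by
    rintro J rfl
    show Order.krullDim (Submodule R (R ⧸ Ideal.map (algebraMap A R) T)) = _
    rw [show (12 * (t + 1) - 4 : ℕ) = 12 * t + 8 from by omega,
      Order.krullDim_eq_of_orderIso (hs_submoduleOrderIso (Ideal.map (algebraMap A R) T)),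
      Order.krullDim_eq_of_orderIso (Ideal.relIsoOfBijective _ hbij),
      hs_krullDim hyy hsp hind hn t]
  exact key _ hJ
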